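/- arXiv:2310.01101 — 4 statements merged into one kernel-verified Lean document; each statement's English description precedes it below -/
import Mathlib

section
/- Let α₂, α₃, K > 0 and λ₁, λ₂ be real constants. Suppose q : ℝ → ℝ is twice continuously differentiable with q' bounded on [0,∞), and satisfies for all t ≥ 0: (α₂ + α₃ cos(q t)) · q''(t) − α₃ · (q'(t))² · sin(q t) = λ₁ and α₂ · q''(t) + K · q(t) = 0. Then λ₁ = 0. -/
open Real

theorem stmt_0 (α₂ α₃ K lam₁ lam₂ : ℝ) (hα₂ : 0 < α₂) (hα₃ : 0 < α₃) (hK : 0 < K)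
    (q : ℝ → ℝ) (hq : ContDiff ℝ 2 q)
    (C : ℝ) (hbdd : ∀ t ≥ (0 : ℝ), |deriv q t| ≤ C)
    (h1 : ∀ t ≥ (0 : ℝ),
      (α₂ + α₃ * Real.cos (q t)) * deriv (deriv q) t
        - α₃ * (deriv q t) ^ 2 * Real.sin (q t) = lam₁)
    (h2 : ∀ t ≥ (0 : ℝ), α₂ * deriv (deriv q) t + K * q t = 0) :
    lam₁ = 0 := by
  have hqd : Differentiable ℝ q := hq.differentiable (by norm_num)
  have hq' : ContDiff ℝ 1 (deriv q) := by
    have := (contDiff_succ_iff_deriv (n := 1)).mp (by exact_mod_cast hq)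
    exact this.2.2
  have hq'd : Differentiable ℝ (deriv q) := hq'.differentiable (by norm_num)
  set F : ℝ → ℝ := fun t => (α₂ + α₃ * Real.cos (q t)) * deriv q t with hF
  have hFd : ∀ t ≥ (0:ℝ), HasDerivAt F lam₁ t := by
    intro t ht
    have h1t := h1 t ht
    have hqt : HasDerivAt q (deriv q t) t := (hqd t).hasDerivAt
    have hq't : HasDerivAt (deriv q) (deriv (deriv q) t) t := (hq'd t).hasDerivAt
    have hcos : HasDerivAt (fun s => Real.cos (q s)) (-Real.sin (q t) * deriv q t) t :=
      (Real.hasDerivAt_cos (q t)).comp t hqt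
    have := ((hcos.const_mul α₃).const_add α₂).mul hq't
    exact this.congr_deriv (by rw [← h1t]; ring)
  -- F is bounded on [0,∞)
  have hC0 : 0 ≤ C := (abs_nonneg _).trans (hbdd 0 le_rfl)
  have hFb : ∀ t ≥ (0:ℝ), |F t| ≤ (α₂ + α₃) * C := by
    intro t ht
    have h1b : |α₂ + α₃ * Real.cos (q t)| ≤ α₂ + α₃ := by
      have := abs_cos_le_one (q t)
      calc |α₂ + α₃ * Real.cos (q t)| ≤ |α₂| + |α₃ * Real.cos (q t)| := abs_add_le _ _
        _ ≤ α₂ + α₃ := by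
            rw [abs_of_pos hα₂, abs_mul, abs_of_pos hα₃]
            nlinarith
    calc |F t| = |α₂ + α₃ * Real.cos (q t)| * |deriv q t| := abs_mul _ _
      _ ≤ (α₂ + α₃) * C := by
          apply mul_le_mul h1b (hbdd t ht) (abs_nonneg _)
          positivity
  -- MVT: for t > 0, F t - F 0 = lam₁ * t
  have key : ∀ t > (0:ℝ), F t - F 0 = lam₁ * t := by
    intro t ht
    have hcont : ContinuousOn F (Set.Icc 0 t) := by
      apply Continuous.continuousOn
      exact (continuous_const.add (continuous_const.mul (Real.continuous_cos.comp hqd.continuous))).mul hq'd.continuous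
    obtain ⟨c, hc, hcd⟩ := exists_hasDerivAt_eq_slope F (fun _ => lam₁) ht hcont
      (fun x hx => hFd x (le_of_lt hx.1))
    field_simp at hcd
    rw [sub_zero, eq_div_iff ht.ne'] at hcd
    linarith [hcd]
  -- conclude
  by_contra hne
  have hpos : 0 < |lam₁| := abs_pos.mpr hne
  set M := (α₂ + α₃) * C with hM
  have hM0 : 0 ≤ M := by positivity
  set t := (2 * M + 1) / |lam₁| with htdef
  have ht : 0 < t := by positivity
  have := key t ht
  have h1' : |lam₁ * t| ≤ 2 * M := by
    rw [← this]
    calc |F t - F 0| ≤ |F t| + |F 0| := abs_sub _ _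
      _ ≤ 2 * M := by linarith [hFb t ht.le, hFb 0 le_rfl]
  rw [abs_mul, abs_of_pos ht, htdef] at h1'
  rw [mul_div_cancel₀ _ (ne_of_gt hpos)] at h1'
  linarith
end

section
/- Let α₂, α₃, K > 0. Suppose q : ℝ → ℝ is twice continuously differentiable with q' bounded on [0,∞), and satisfies for all t ≥ 0: (α₂ + α₃ cos(q t)) · q''(t) − α₃ · (q'(t))² · sin(q t) = 0 and α₂ · q''(t) + K · q(t) = 0. Then q(t) = 0 for all t ≥ 0. -/
open Real

private lemma const_of_deriv_zero (f : ℝ → ℝ) (hf : Differentiable ℝ f)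
    (h : ∀ x ≥ (0:ℝ), deriv f x = 0) : ∀ t ≥ (0:ℝ), f t = f 0 := by
  intro t ht
  have key := constant_of_has_deriv_right_zero (f := f) (a := 0) (b := t)
    hf.continuous.continuousOn
    (fun x hx => by
      have hd := (hf x).hasDerivAt
      rw [h x hx.1] at hd
      exact hd.hasDerivWithinAt)
  exact key t ⟨ht, le_rfl⟩

theorem stmt_1 (α₂ α₃ K : ℝ) (hα₂ : 0 < α₂) (hα₃ : 0 < α₃) (hK : 0 < K)
    (q : ℝ → ℝ) (hq : ContDiff ℝ 2 q)
    (C : ℝ) (hbdd : ∀ t ≥ (0 : ℝ), |deriv q t| ≤ C)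
    (h1 : ∀ t ≥ (0 : ℝ),
      (α₂ + α₃ * Real.cos (q t)) * deriv (deriv q) t
        - α₃ * (deriv q t) ^ 2 * Real.sin (q t) = 0)
    (h2 : ∀ t ≥ (0 : ℝ), α₂ * deriv (deriv q) t + K * q t = 0) :
    ∀ t ≥ (0 : ℝ), q t = 0 := by
  have hqd : Differentiable ℝ q := hq.differentiable (by norm_num)
  have hq1c : ContDiff ℝ 1 (deriv q) := by
    have h := contDiff_succ_iff_deriv.mp (show ContDiff ℝ (1+1) q by exact_mod_cast hq)
    exact h.2.2
  have hq1d : Differentiable ℝ (deriv q) := hq1c.differentiable (by norm_num)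
  set q1 : ℝ → ℝ := deriv q with hq1def
  set q2 : ℝ → ℝ := deriv q1 with hq2def
  have hd1 : ∀ s, HasDerivAt q (q1 s) s := fun s => (hqd s).hasDerivAt
  have hd2 : ∀ s, HasDerivAt q1 (q2 s) s := fun s => (hq1d s).hasDerivAt
  -- Energy is constant
  set E : ℝ → ℝ := fun s => α₂ * (q1 s) ^ 2 + K * (q s) ^ 2 with hEdef
  have hE : ∀ s, HasDerivAt E (α₂ * (2 * q1 s * q2 s) + K * (2 * q s * q1 s)) s := by
    intro s
    have h₁ : HasDerivAt (fun x => (q1 x) ^ 2) (2 * q1 s * q2 s) s := by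
      simpa [mul_comm, mul_assoc] using (hd2 s).fun_pow 2
    have h₂ : HasDerivAt (fun x => (q x) ^ 2) (2 * q s * q1 s) s := by
      simpa [mul_comm, mul_assoc] using (hd1 s).fun_pow 2
    exact (h₁.const_mul α₂).add (h₂.const_mul K)
  have hEconst : ∀ s ≥ (0:ℝ), E s = E 0 := by
    apply const_of_deriv_zero E (fun s => (hE s).differentiableAt)
    intro s hs
    rw [(hE s).deriv]
    have h := h2 s hs
    linear_combination 2 * q1 s * h
  -- q is bounded
  set M : ℝ := Real.sqrt (E 0 / K) with hMdef
  have hM : ∀ s ≥ (0:ℝ), |q s| ≤ M := by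
    intro s hs
    have h1' : K * (q s) ^ 2 ≤ E 0 := by
      have h := hEconst s hs
      simp only [hEdef] at h ⊢
      nlinarith [sq_nonneg (q1 s)]
    have h2' : (q s) ^ 2 ≤ E 0 / K := by
      rw [le_div_iff₀ hK]; linarith [h1']
    calc |q s| = Real.sqrt ((q s) ^ 2) := (Real.sqrt_sq_eq_abs _).symm
      _ ≤ M := Real.sqrt_le_sqrt h2'
  -- F = (α₂ + α₃ cos q) q' is constant
  set F : ℝ → ℝ := fun s => (α₂ + α₃ * Real.cos (q s)) * q1 s with hFdef
  have hF : ∀ s, HasDerivAt F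
      ((α₃ * (-Real.sin (q s) * q1 s)) * q1 s + (α₂ + α₃ * Real.cos (q s)) * q2 s) s := by
    intro s
    have hc : HasDerivAt (fun x => Real.cos (q x)) (-Real.sin (q s) * q1 s) s :=
      (Real.hasDerivAt_cos (q s)).comp s (hd1 s)
    exact (((hc.const_mul α₃).const_add α₂)).mul (hd2 s)
  have hFconst : ∀ s ≥ (0:ℝ), F s = F 0 := by
    apply const_of_deriv_zero F (fun s => (hF s).differentiableAt)
    intro s hs
    rw [(hF s).deriv]
    have h := h1 s hs
    linear_combination h
  -- G = α₂ q + α₃ sin q - F 0 * t is constant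
  set G : ℝ → ℝ := fun s => α₂ * q s + α₃ * Real.sin (q s) - F 0 * s with hGdef
  have hG : ∀ s, HasDerivAt G
      (α₂ * q1 s + α₃ * (Real.cos (q s) * q1 s) - F 0 * 1) s := by
    intro s
    have hsin : HasDerivAt (fun x => Real.sin (q x)) (Real.cos (q s) * q1 s) s :=
      (Real.hasDerivAt_sin (q s)).comp s (hd1 s)
    exact (((hd1 s).const_mul α₂).add (hsin.const_mul α₃)).sub ((hasDerivAt_id s).const_mul (F 0))
  have hGconst : ∀ s ≥ (0:ℝ), G s = G 0 := by
    apply const_of_deriv_zero G (fun s => (hG s).differentiableAt)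
    intro s hs
    rw [(hG s).deriv]
    have hFs := hFconst s hs
    rw [← hFs]
    simp only [hFdef]
    ring
  -- F 0 = 0
  have hMnn : 0 ≤ M := Real.sqrt_nonneg _
  have hlinbound : ∀ s ≥ (0:ℝ), |F 0 * s| ≤ 2 * (α₂ * M + α₃) := by
    intro s hs
    have hGs := hGconst s hs
    simp only [hGdef] at hGs
    have hqs := hM s hs
    have hq0 := hM 0 le_rfl
    have hsin1 : |Real.sin (q s)| ≤ 1 := Real.abs_sin_le_one _
    have hsin2 : |Real.sin (q 0)| ≤ 1 := Real.abs_sin_le_one _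
    have : F 0 * s = α₂ * q s + α₃ * Real.sin (q s) - (α₂ * q 0 + α₃ * Real.sin (q 0)) := by
      linarith [hGs]
    rw [this]
    have h1 : |α₂ * q s| ≤ α₂ * M := by
      rw [abs_mul, abs_of_pos hα₂]; exact mul_le_mul_of_nonneg_left hqs hα₂.le
    have h2 : |α₂ * q 0| ≤ α₂ * M := by
      rw [abs_mul, abs_of_pos hα₂]; exact mul_le_mul_of_nonneg_left hq0 hα₂.le
    have h3 : |α₃ * Real.sin (q s)| ≤ α₃ := by
      rw [abs_mul, abs_of_pos hα₃]
      calc α₃ * |Real.sin (q s)| ≤ α₃ * 1 := mul_le_mul_of_nonneg_left hsin1 hα₃.le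
        _ = α₃ := mul_one _
    have h4 : |α₃ * Real.sin (q 0)| ≤ α₃ := by
      rw [abs_mul, abs_of_pos hα₃]
      calc α₃ * |Real.sin (q 0)| ≤ α₃ * 1 := mul_le_mul_of_nonneg_left hsin2 hα₃.le
        _ = α₃ := mul_one _
    calc |α₂ * q s + α₃ * Real.sin (q s) - (α₂ * q 0 + α₃ * Real.sin (q 0))|
        ≤ |α₂ * q s + α₃ * Real.sin (q s)| + |α₂ * q 0 + α₃ * Real.sin (q 0)| := abs_sub _ _
      _ ≤ (|α₂ * q s| + |α₃ * Real.sin (q s)|) + (|α₂ * q 0| + |α₃ * Real.sin (q 0)|) := by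
          gcongr <;> exact abs_add_le _ _
      _ ≤ 2 * (α₂ * M + α₃) := by linarith
  have hF0 : F 0 = 0 := by
    by_contra hne
    set B : ℝ := 2 * (α₂ * M + α₃) with hBdef
    have hBnn : 0 ≤ B := by positivity
    have habs : 0 < |F 0| := abs_pos.mpr hne
    set s : ℝ := (B + 1) / |F 0| with hsdef
    have hs : 0 ≤ s := div_nonneg (by linarith) habs.le
    have := hlinbound s hs
    rw [abs_mul, abs_of_nonneg hs, hsdef, mul_div_cancel₀ _ habs.ne'] at this
    linarith
  -- So (α₂ + α₃ cos q) q' = 0 on [0, ∞), hence q'^3 sin q = 0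
  have hFzero : ∀ s ≥ (0:ℝ), (α₂ + α₃ * Real.cos (q s)) * q1 s = 0 := by
    intro s hs
    have h := hFconst s hs
    rw [hF0] at h
    simpa [hFdef] using h
  have hcube : ∀ s ≥ (0:ℝ), q1 s = 0 ∨ Real.sin (q s) = 0 := by
    intro s hs
    have hA := h1 s hs
    have hB := hFzero s hs
    have : α₃ * (q1 s) ^ 3 * Real.sin (q s) = 0 := by
      linear_combination (-(q1 s)) * hA + q2 s * hB
    rcases mul_eq_zero.mp this with h | h
    · rcases mul_eq_zero.mp h with h' | h'
      · exact absurd h' hα₃.ne'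
      · left; exact pow_eq_zero_iff (by norm_num) |>.mp h'
    · right; exact h
  have hq1cont : Continuous q1 := hq1c.continuous
  -- q' = 0 on (0, ∞)
  have hq1zero : ∀ s > (0:ℝ), q1 s = 0 := by
    intro s hs
    by_contra hne
    have hsin0 : Real.sin (q s) = 0 := by
      rcases hcube s hs.le with h | h
      · exact absurd h hne
      · exact h
    -- neighborhood where q1 ≠ 0 and s > 0
    have hopen : IsOpen {x : ℝ | q1 x ≠ 0} := isOpen_ne.preimage hq1cont
    have hnhds : {x : ℝ | q1 x ≠ 0} ∩ Set.Ioi 0 ∈ nhds s :=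
      Filter.inter_mem (hopen.mem_nhds hne) (isOpen_Ioi.mem_nhds hs)
    have hev : (fun x => Real.sin (q x)) =ᶠ[nhds s] (fun _ => (0:ℝ)) := by
      filter_upwards [hnhds] with x hx
      rcases hcube x (le_of_lt hx.2) with h | h
      · exact absurd h hx.1
      · exact h
    have hderiv0 : deriv (fun x => Real.sin (q x)) s = 0 := by
      rw [hev.deriv_eq]; simp
    have hsinderiv : HasDerivAt (fun x => Real.sin (q x)) (Real.cos (q s) * q1 s) s :=
      (Real.hasDerivAt_sin (q s)).comp s (hd1 s)
    have hcos0 : Real.cos (q s) = 0 := by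
      have := hsinderiv.deriv
      rw [hderiv0] at this
      rcases mul_eq_zero.mp this.symm with h | h
      · exact h
      · exact absurd h hne
    nlinarith [Real.sin_sq_add_cos_sq (q s)]
  -- q' = 0 at 0 by continuity
  have hq1zero' : ∀ s ≥ (0:ℝ), q1 s = 0 := by
    intro s hs
    rcases lt_or_eq_of_le hs with h | h
    · exact hq1zero s h
    · subst h
      have h₁ : Filter.Tendsto q1 (nhdsWithin 0 (Set.Ioi 0)) (nhds (q1 0)) :=
        (hq1cont.tendsto 0).mono_left nhdsWithin_le_nhds
      have h₂ : Filter.Tendsto q1 (nhdsWithin 0 (Set.Ioi 0)) (nhds 0) := by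
        apply Filter.Tendsto.congr' _ tendsto_const_nhds
        filter_upwards [self_mem_nhdsWithin] with x hx
        exact (hq1zero x hx).symm
      exact tendsto_nhds_unique h₁ h₂
  -- q is constant on [0, ∞)
  have hqconst : ∀ s ≥ (0:ℝ), q s = q 0 := by
    apply const_of_deriv_zero q hqd
    intro s hs
    exact hq1zero' s hs
  -- q'' (1) = 0, hence q 1 = 0, hence q 0 = 0
  have hq2one : q2 1 = 0 := by
    have hev : q1 =ᶠ[nhds 1] (fun _ => (0:ℝ)) := by
      have : Set.Ioi (0:ℝ) ∈ nhds 1 := isOpen_Ioi.mem_nhds (by norm_num)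
      filter_upwards [this] with x hx
      exact hq1zero x hx
    rw [hq2def, hev.deriv_eq]; simp
  have hq1eq : q 1 = 0 := by
    have := h2 1 (by norm_num)
    rw [hq2one] at this
    have : K * q 1 = 0 := by linarith
    exact (mul_eq_zero.mp this).resolve_left hK.ne' 
  have hq0 : q 0 = 0 := by
    have := hqconst 1 (by norm_num)
    rw [hq1eq] at this
    exact this.symm
  intro t ht
  rw [hqconst t ht, hq0]
end

section
/- Let α₁, α₂, α₃, K₁, K₂ > 0 with α₂ ≠ α₃, and let q₂*, u₂* be real constants. Set M₁₁ = α₁ + α₂ + 2α₃ cos(q₂*) and M₂₁ = α₂ + α₃ cos(q₂*), and assume M₁₁ > 0. Suppose q₁ : ℝ → ℝ is twice continuously differentiable and for all t ≥ 0: M₁₁ · q₁''(t) + K₁ · q₁(t) = 0 and M₂₁ · q₁''(t) + α₃ · (q₁'(t))² · sin(q₂*) = u₂* − K₂ · q₂*. Then q₁(t) = 0 for all t ≥ 0. -/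
open Real Set

theorem stmt_3 (α₁ α₂ α₃ K₁ K₂ : ℝ) (hα₁ : 0 < α₁) (hα₂ : 0 < α₂) (hα₃ : 0 < α₃)
    (hK₁ : 0 < K₁) (hK₂ : 0 < K₂) (hne : α₂ ≠ α₃) (q₂star u₂star : ℝ)
    (M₁₁ M₂₁ : ℝ)
    (hM11 : M₁₁ = α₁ + α₂ + 2 * α₃ * Real.cos q₂star)
    (hM21 : M₂₁ = α₂ + α₃ * Real.cos q₂star)
    (hM11pos : 0 < M₁₁)
    (q₁ : ℝ → ℝ) (hq : ContDiff ℝ 2 q₁)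
    (h1 : ∀ t ≥ (0 : ℝ), M₁₁ * deriv (deriv q₁) t + K₁ * q₁ t = 0)
    (h2 : ∀ t ≥ (0 : ℝ),
      M₂₁ * deriv (deriv q₁) t + α₃ * (deriv q₁ t) ^ 2 * Real.sin q₂star
        = u₂star - K₂ * q₂star) :
    ∀ t ≥ (0 : ℝ), q₁ t = 0 := by
  have hd1 : Differentiable ℝ q₁ := hq.differentiable (by norm_num)
  have hd2 : Differentiable ℝ (deriv q₁) := by
    have h := (contDiff_succ_iff_deriv (n := 1)).mp (by exact_mod_cast hq)
    exact h.2.2.differentiable one_ne_zero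
  set s : ℝ := α₃ * Real.sin q₂star with hs
  -- energy conservation
  have hEconst : ∀ x ≥ (0:ℝ), M₁₁ * (deriv q₁ x)^2 + K₁ * (q₁ x)^2
      = M₁₁ * (deriv q₁ 0)^2 + K₁ * (q₁ 0)^2 := by
    intro x hx
    rcases eq_or_lt_of_le hx with h | h
    · rw [← h]
    · have key := constant_of_has_deriv_right_zero
        (f := fun y => M₁₁ * (deriv q₁ y)^2 + K₁ * (q₁ y)^2) (a := 0) (b := x)
        (by
          apply Continuous.continuousOn
          exact ((continuous_const.mul ((hd2.continuous).pow 2)).add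
            (continuous_const.mul ((hd1.continuous).pow 2))))
        (by
          intro y hy
          have hy0 : (0:ℝ) ≤ y := hy.1
          have hA : HasDerivAt (fun z => M₁₁ * (deriv q₁ z)^2 + K₁ * (q₁ z)^2)
              (M₁₁ * (2 * deriv q₁ y * deriv (deriv q₁) y)
                + K₁ * (2 * q₁ y * deriv q₁ y)) y := by
            have h1' : HasDerivAt (fun z => (deriv q₁ z)^2)
                (2 * deriv q₁ y * deriv (deriv q₁) y) y := by
              have := ((hd2 y).hasDerivAt).pow 2
              simpa [mul_comm, mul_assoc, Pi.pow_def] using this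
            have h2' : HasDerivAt (fun z => (q₁ z)^2)
                (2 * q₁ y * deriv q₁ y) y := by
              have := ((hd1 y).hasDerivAt).pow 2
              simpa [mul_comm, mul_assoc, Pi.pow_def] using this
            exact (h1'.const_mul M₁₁).add (h2'.const_mul K₁)
          have hz : M₁₁ * (2 * deriv q₁ y * deriv (deriv q₁) y)
              + K₁ * (2 * q₁ y * deriv q₁ y) = 0 := by
            have := h1 y hy0
            linear_combination 2 * deriv q₁ y * this
          rw [hz] at hA
          exact hA.hasDerivWithinAt)
        x (by constructor <;> [exact le_of_lt h; exact le_rfl])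
      simpa using key
  -- the key conserved polynomial in q₁
  have hkey : ∀ x ≥ (0:ℝ), s * (q₁ x)^2 + M₂₁ * q₁ x = s * (q₁ 0)^2 + M₂₁ * q₁ 0 := by
    intro x hx
    have hA := h1 x hx
    have hA0 := h1 0 le_rfl
    have hB := h2 x hx
    have hB0 := h2 0 le_rfl
    have hC := hEconst x hx
    have hmul : K₁ * (s * (q₁ x)^2 + M₂₁ * q₁ x) = K₁ * (s * (q₁ 0)^2 + M₂₁ * q₁ 0) := by
      linear_combination (-M₁₁) * hB + M₁₁ * hB0 + M₂₁ * hA - M₂₁ * hA0 + s * hC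
    exact mul_left_cancel₀ (ne_of_gt hK₁) hmul
  -- if q₁ is constant on [0,∞) then it is zero there
  have hconstzero : (∀ x ≥ (0:ℝ), q₁ x = q₁ 0) → ∀ x ≥ (0:ℝ), q₁ x = 0 := by
    intro hc
    have hder : ∀ x > (0:ℝ), deriv q₁ x = 0 := by
      intro x hx
      have hev : q₁ =ᶠ[nhds x] fun _ => q₁ 0 :=
        Filter.eventually_of_mem (Ioi_mem_nhds hx) (fun y hy => hc y (le_of_lt hy))
      rw [hev.deriv_eq]
      exact deriv_const x (q₁ 0)
    have hder2 : deriv (deriv q₁) 1 = 0 := by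
      have hev : deriv q₁ =ᶠ[nhds (1:ℝ)] fun _ => (0:ℝ) :=
        Filter.eventually_of_mem (Ioi_mem_nhds one_pos) (fun y hy => hder y hy)
      rw [hev.deriv_eq]
      exact deriv_const 1 0
    have h11 := h1 1 (by norm_num)
    rw [hder2] at h11
    have hq1 : q₁ 1 = 0 := by
      have := h11
      nlinarith
    have hq0 : q₁ 0 = 0 := by rw [← hc 1 (by norm_num)]; exact hq1
    intro x hx
    rw [hc x hx, hq0]
  -- main case analysis
  by_cases hs0 : s = 0
  · -- s = 0 : M₂₁ * q₁ is constant
    have hsin : Real.sin q₂star = 0 := by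
      have := hs0
      rw [hs] at this
      rcases mul_eq_zero.mp this with h | h
      · exact absurd h (ne_of_gt hα₃)
      · exact h
    by_cases hM21z : M₂₁ = 0
    · exfalso
      have hc2 : Real.cos q₂star ^ 2 = 1 := by
        have := Real.sin_sq_add_cos_sq q₂star
        rw [hsin] at this; nlinarith
      have h0 : α₂ + α₃ * Real.cos q₂star = 0 := by
        rw [hM21] at hM21z; linarith
      have hsq : α₂ ^ 2 = α₃ ^ 2 := by
        linear_combination (α₂ - α₃ * Real.cos q₂star) * h0 + α₃ ^ 2 * hc2
      have : α₂ = α₃ := by nlinarith [hsq]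
      exact hne this
    · apply hconstzero
      intro x hx
      have := hkey x hx
      rw [hs0] at this
      have h' : M₂₁ * q₁ x = M₂₁ * q₁ 0 := by linarith
      exact mul_left_cancel₀ hM21z h'
  · -- s ≠ 0 : (q₁ + M₂₁/(2s))² is constant, so by IVT q₁ is constant
    set g : ℝ → ℝ := fun x => q₁ x + M₂₁ / (2 * s) with hg
    have hg2 : ∀ x ≥ (0:ℝ), (g x)^2 = (g 0)^2 := by
      intro x hx
      have h := hkey x hx
      have hs' : s ≠ 0 := hs0
      simp only [hg]
      rw [hs] at h
      field_simp
      ring_nf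
      linear_combination (4 * α₃ * Real.sin q₂star) * h
    have hgconst : ∀ x ≥ (0:ℝ), g x = g 0 := by
      intro x hx
      by_contra hne'
      have hsq := hg2 x hx
      have hgx : g x = - g 0 := by
        have : (g x - g 0) * (g x + g 0) = 0 := by nlinarith
        rcases mul_eq_zero.mp this with h | h
        · exact absurd (by linarith) hne'
        · linarith
      have hg0ne : g 0 ≠ 0 := by
        intro h0
        apply hne'
        rw [h0]
        nlinarith [hg2 x hx]
      -- IVT on [0, x]
      have hcont : ContinuousOn g (uIcc 0 x) :=
        ((hd1.continuous).add continuous_const).continuousOn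
      have hmem : (0:ℝ) ∈ uIcc (g 0) (g x) := by
        rw [hgx]
        rcases le_total (g 0) 0 with h | h
        · exact mem_uIcc.mpr (Or.inl ⟨h, by linarith⟩)
        · exact mem_uIcc.mpr (Or.inr ⟨by linarith, h⟩)
      obtain ⟨c, hc, hgc⟩ := intermediate_value_uIcc hcont hmem
      have hc0 : (0:ℝ) ≤ c := by
        rw [uIcc_of_le hx] at hc
        exact hc.1
      have := hg2 c hc0
      rw [hgc] at this
      exact hg0ne (by nlinarith)
    apply hconstzero
    intro x hx
    have := hgconst x hx
    simp only [hg] at this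
    linarith
end

section
/- Let M : ℝ → Matrix (Fin n) (Fin n) ℝ be a differentiable symmetric-matrix-valued function along a trajectory, K a symmetric positive semidefinite constant matrix, and q : ℝ → ℝⁿ twice differentiable satisfying M(t)·q''(t) = u(t) − C(t)·q'(t) − K·q(t) where Ṁ(t) − 2C(t) is skew-symmetric for all t. Define U(t) = ½ q'(t)ᵀ M(t) q'(t) + ½ q(t)ᵀ K q(t). Then U'(t) = q'(t)ᵀ u(t) for all t. -/
open Matrix

private lemma quad_deriv {n : ℕ} (A A' : ℝ → Matrix (Fin n) (Fin n) ℝ)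
    (v v' w w' : ℝ → Fin n → ℝ) (t : ℝ)
    (hA : ∀ i j, HasDerivAt (fun s => A s i j) (A' t i j) t)
    (hv : ∀ i, HasDerivAt (fun s => v s i) (v' t i) t)
    (hw : ∀ i, HasDerivAt (fun s => w s i) (w' t i) t) :
    HasDerivAt (fun s => v s ⬝ᵥ A s *ᵥ w s)
      (v' t ⬝ᵥ A t *ᵥ w t + v t ⬝ᵥ A' t *ᵥ w t + v t ⬝ᵥ A t *ᵥ w' t) t := by
  have hfun : (fun s => v s ⬝ᵥ A s *ᵥ w s)
      = fun s => ∑ i, ∑ j, v s i * (A s i j * w s j) := by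
    funext s
    simp [dotProduct, mulVec, Finset.mul_sum]
  rw [hfun]
  have h : HasDerivAt (fun s => ∑ i, ∑ j, v s i * (A s i j * w s j))
      (∑ i, ∑ j, (v' t i * (A t i j * w t j)
        + v t i * (A' t i j * w t j + A t i j * w' t j))) t := by
    apply HasDerivAt.fun_sum
    intro i _
    apply HasDerivAt.fun_sum
    intro j _
    exact (hv i).mul ((hA i j).mul (hw j))
  convert h using 1
  simp only [dotProduct, mulVec, Finset.mul_sum, ← Finset.sum_add_distrib]
  refine Finset.sum_congr rfl fun i _ => ?_
  refine Finset.sum_congr rfl fun j _ => ?_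
  ring

private lemma dot_symm {n : ℕ} (A : Matrix (Fin n) (Fin n) ℝ) (hA : A.IsSymm)
    (x y : Fin n → ℝ) : x ⬝ᵥ A *ᵥ y = y ⬝ᵥ A *ᵥ x := by
  rw [dotProduct_mulVec, ← mulVec_transpose, hA.eq, dotProduct_comm]

theorem stmt_13 (n : ℕ)
    (M : ℝ → Matrix (Fin n) (Fin n) ℝ) (M' : ℝ → Matrix (Fin n) (Fin n) ℝ)
    (hMsymm : ∀ t, (M t).IsSymm)
    (hM' : ∀ t i j, HasDerivAt (fun s => M s i j) (M' t i j) t)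
    (K : Matrix (Fin n) (Fin n) ℝ) (hKsymm : K.IsSymm) (hKpsd : K.PosSemidef)
    (q q' q'' u : ℝ → Fin n → ℝ) (C : ℝ → Matrix (Fin n) (Fin n) ℝ)
    (hq' : ∀ t i, HasDerivAt (fun s => q s i) (q' t i) t)
    (hq'' : ∀ t i, HasDerivAt (fun s => q' s i) (q'' t i) t)
    (heq : ∀ t, (M t) *ᵥ q'' t = u t - (C t) *ᵥ q' t - K *ᵥ q t)
    (hskew : ∀ t, (M' t - 2 • C t)ᵀ = -(M' t - 2 • C t))
    (U : ℝ → ℝ)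
    (hU : U = fun t => (1 / 2) * (q' t ⬝ᵥ (M t) *ᵥ q' t)
      + (1 / 2) * (q t ⬝ᵥ K *ᵥ q t)) :
    ∀ t, HasDerivAt U (q' t ⬝ᵥ u t) t := by
  intro t
  have h1 := quad_deriv M M' q' q'' q' q'' t (hM' t) (hq'' t) (hq'' t)
  have h2 := quad_deriv (fun _ => K) (fun _ => 0) q q' q q' t
    (fun i j => hasDerivAt_const t (K i j)) (hq' t) (hq' t)
  have hD : HasDerivAt U
      ((1/2) * (q'' t ⬝ᵥ M t *ᵥ q' t + q' t ⬝ᵥ M' t *ᵥ q' t + q' t ⬝ᵥ M t *ᵥ q'' t)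
        + (1/2) * (q' t ⬝ᵥ K *ᵥ q t + q t ⬝ᵥ (0 : Matrix (Fin n) (Fin n) ℝ) *ᵥ q t
            + q t ⬝ᵥ K *ᵥ q' t)) t := by
    rw [hU]
    exact (h1.const_mul (1/2)).add (h2.const_mul (1/2))
  convert hD using 1
  -- algebra
  have hMsym : q'' t ⬝ᵥ M t *ᵥ q' t = q' t ⬝ᵥ M t *ᵥ q'' t := dot_symm _ (hMsymm t) _ _
  have hKsym : q' t ⬝ᵥ K *ᵥ q t = q t ⬝ᵥ K *ᵥ q' t := dot_symm _ hKsymm _ _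
  have hskew0 : q' t ⬝ᵥ (M' t - 2 • C t) *ᵥ q' t = 0 := by
    have key : q' t ⬝ᵥ (M' t - 2 • C t) *ᵥ q' t
        = -(q' t ⬝ᵥ (M' t - 2 • C t) *ᵥ q' t) := by
      conv_lhs => rw [dotProduct_mulVec, ← transpose_transpose (M' t - 2 • C t),
        vecMul_transpose, hskew t, neg_mulVec, neg_dotProduct, dotProduct_comm]
    linarith
  have e2 : q' t ⬝ᵥ M' t *ᵥ q' t = 2 * (q' t ⬝ᵥ C t *ᵥ q' t) := by
    rw [two_smul] at hskew0
    simp only [sub_mulVec, dotProduct_sub, add_mulVec, dotProduct_add] at hskew0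
    linarith
  have e1 : q' t ⬝ᵥ M t *ᵥ q'' t
      = q' t ⬝ᵥ u t - q' t ⬝ᵥ C t *ᵥ q' t - q' t ⬝ᵥ K *ᵥ q t := by
    rw [heq t]
    simp [dotProduct_sub]
  simp only [Matrix.zero_mulVec, dotProduct_zero]
  rw [hMsym, hKsym] at *
  rw [e1, e2]
  linarith
end
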